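/- Let P_1, …, P_n be polytopes in R^n and for each j let P_j^y ⊂ R^n × R^n be the Minkowski sum (P_j × {0}) + ({0} × S_n), where S_n is the unit simplex in R^n. Then the 2n-dimensional mixed volume MV_{2n}(P_1^y, …, P_n^y, S_n^y, …, S_n^y), with n copies of S_n^y = {0} × S_n, equals the n-dimensional mixed volume MV_n(P_1, …, P_n). -/

import Mathlib

open Pointwise MeasureTheory

/-- A polytope: the convex hull of a nonempty finite set. -/
def IsPolytope {V : Type*} [AddCommGroup V] [Module ℝ V] (P : Set V) : Prop :=
  ∃ S : Finset V, S.Nonempty ∧ P = convexHull ℝ (S : Set V)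

/-- The mixed volume of a finite family of bodies, via inclusion–exclusion:
`MV(P_1,…,P_n) = ∑_{∅ ≠ I ⊆ {1,…,n}} (-1)^{n-|I|} Vol(∑_{i∈I} P_i)`;
with this normalization `MV(P,…,P) = n! Vol(P)` and `MV(S_n,…,S_n) = 1` for
the unit simplex `S_n`. -/
noncomputable def mixedVol {ι : Type*} [Fintype ι] {V : Type*} [AddCommGroup V]
    [MeasureSpace V] (P : ι → Set V) : ℝ :=
  ∑ I ∈ Finset.univ.powerset, if I.Nonempty then
    (-1 : ℝ) ^ (Fintype.card ι - I.card) * (volume (∑ i ∈ I, P i)).toReal else 0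

/-- The unit simplex `Conv{0, e_1, …, e_n} ⊂ ℝ^n`. -/
noncomputable def unitSimplex (n : ℕ) : Set (Fin n → ℝ) :=
  convexHull ℝ (insert 0 (Set.range fun i : Fin n => Pi.single i (1 : ℝ)))


section AuxComb
open Finset

noncomputable def Dfun (n j : ℕ) : ℝ :=
  ∑ b ∈ Finset.range (n + 1), (-1 : ℝ) ^ (n - b) * (n.choose b) * (b : ℝ) ^ j

lemma neg_one_pow_sub {n b : ℕ} (h : b ≤ n) :
    ((-1 : ℝ)) ^ (n - b) = (-1 : ℝ) ^ n * (-1 : ℝ) ^ b := by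
  have h1 : (-1 : ℝ) ^ (n - b) * (-1 : ℝ) ^ b = (-1 : ℝ) ^ n := by
    rw [← pow_add, Nat.sub_add_cancel h]
  have hb : ((-1 : ℝ) ^ b) * ((-1 : ℝ) ^ b) = 1 := by
    rw [← pow_add, ← two_mul, pow_mul]; norm_num
  calc (-1 : ℝ) ^ (n - b) = (-1 : ℝ) ^ (n - b) * (((-1 : ℝ) ^ b) * ((-1 : ℝ) ^ b)) := by
        rw [hb, mul_one]
    _ = (-1 : ℝ) ^ n * (-1 : ℝ) ^ b := by rw [← mul_assoc, h1]

lemma Dfun_zero {n : ℕ} (hn : n ≠ 0) : Dfun n 0 = 0 := by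
  have h := Int.alternating_sum_range_choose_of_ne hn
  have h' : ((∑ i ∈ range (n + 1), (-1 : ℤ) ^ i * n.choose i : ℤ) : ℝ) = 0 := by
    rw [h]; norm_num
  push_cast at h'
  unfold Dfun
  calc ∑ b ∈ range (n + 1), (-1 : ℝ) ^ (n - b) * (n.choose b) * (b : ℝ) ^ 0
      = ∑ b ∈ range (n + 1), (-1 : ℝ) ^ n * ((-1 : ℝ) ^ b * (n.choose b)) := by
        refine Finset.sum_congr rfl fun b hb => ?_
        rw [neg_one_pow_sub (Nat.lt_succ_iff.1 (mem_range.1 hb))]; ring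
    _ = (-1 : ℝ) ^ n * ∑ b ∈ range (n + 1), (-1 : ℝ) ^ b * (n.choose b) := by
        rw [Finset.mul_sum]
    _ = 0 := by rw [h']; ring

lemma Dfun_rec (n j : ℕ) :
    Dfun (n + 1) (j + 1) = (n + 1) * ∑ i ∈ range (j + 1), (j.choose i : ℝ) * Dfun n i := by
  unfold Dfun
  rw [Finset.sum_range_succ']
  simp only [Nat.cast_zero, ne_eq, Nat.succ_ne_zero, not_false_iff, zero_pow, mul_zero, add_zero]
  push_cast
  have key : ∀ c : ℕ, (-1 : ℝ) ^ (n + 1 - (c + 1)) * ((n + 1).choose (c + 1)) * ((c : ℝ) + 1) ^ (j + 1)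
      = (n + 1) * ((-1 : ℝ) ^ (n - c) * (n.choose c) * ((c : ℝ) + 1) ^ j) := by
    intro c
    have h1 : (n + 1 - (c + 1)) = n - c := by omega
    have h2 : (((n + 1).choose (c + 1) : ℝ)) * ((c : ℝ) + 1) = (n + 1) * (n.choose c) := by
      have h3 := Nat.add_one_mul_choose_eq n c
      have h4 : (((n + 1) * n.choose c : ℕ) : ℝ) = (((n + 1).choose (c + 1) * (c + 1) : ℕ) : ℝ) := by
        exact_mod_cast congrArg (fun m : ℕ => (m : ℝ)) h3
    
      push_cast at h4
      linarith
    rw [h1]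
    have h5 : ((c : ℝ) + 1) ^ (j + 1) = ((c : ℝ) + 1) ^ j * ((c : ℝ) + 1) := by ring
    rw [h5]
    calc (-1 : ℝ) ^ (n - c) * ((n + 1).choose (c + 1)) * (((c : ℝ) + 1) ^ j * ((c : ℝ) + 1))
        = (-1 : ℝ) ^ (n - c) * ((((n + 1).choose (c + 1) : ℝ)) * ((c : ℝ) + 1)) * ((c : ℝ) + 1) ^ j := by ring
      _ = (n + 1) * ((-1 : ℝ) ^ (n - c) * (n.choose c) * ((c : ℝ) + 1) ^ j) := by rw [h2]; ring
  have expand : ∀ c : ℕ, ((c : ℝ) + 1) ^ j = ∑ i ∈ range (j + 1), (c : ℝ) ^ i * (j.choose i) := by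
    intro c
    have := add_pow (R := ℝ) (c : ℝ) 1 j
    simpa using this
  calc ∑ c ∈ range (n + 1), (-1 : ℝ) ^ (n - c) * ((n + 1).choose (c + 1)) * (((c : ℕ) : ℝ) + 1) ^ (j + 1)
      = ∑ c ∈ range (n + 1), (n + 1) * ((-1 : ℝ) ^ (n - c) * (n.choose c) * ((c : ℝ) + 1) ^ j) := by
        refine Finset.sum_congr rfl fun c _ => ?_
        have h6 : (n + 1 - (c + 1)) = n - c := by omega
        have := key c
        rw [h6] at this
        exact this
    _ = (n + 1) * ∑ c ∈ range (n + 1), (-1 : ℝ) ^ (n - c) * (n.choose c) * ((c : ℝ) + 1) ^ j := by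
        rw [Finset.mul_sum]
    _ = (n + 1) * ∑ i ∈ range (j + 1), (j.choose i : ℝ) * Dfun n i := by
        congr 1
        calc ∑ c ∈ range (n + 1), (-1 : ℝ) ^ (n - c) * (n.choose c) * ((c : ℝ) + 1) ^ j
            = ∑ c ∈ range (n + 1), ∑ i ∈ range (j + 1),
                (j.choose i : ℝ) * ((-1 : ℝ) ^ (n - c) * (n.choose c) * (c : ℝ) ^ i) := by
              refine Finset.sum_congr rfl fun c _ => ?_
              rw [expand c, Finset.mul_sum]
              refine Finset.sum_congr rfl fun i _ => by ring
          _ = ∑ i ∈ range (j + 1), (j.choose i : ℝ) * Dfun n i := by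
              rw [Finset.sum_comm]
              refine Finset.sum_congr rfl fun i _ => ?_
              simp only [Dfun]
              rw [Finset.mul_sum]

lemma Dfun_lt : ∀ n j, j < n → Dfun n j = 0 := by
  intro n
  induction n with
  | zero => intro j h; omega
  | succ m ih =>
    intro j hj
    cases j with
    | zero => exact Dfun_zero (Nat.succ_ne_zero m)
    | succ i =>
      rw [Dfun_rec]
      have : ∑ k ∈ range (i + 1), (i.choose k : ℝ) * Dfun m k = 0 := by
        refine Finset.sum_eq_zero fun k hk => ?_
        rw [ih k (by have := mem_range.1 hk; omega), mul_zero]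
      rw [this, mul_zero]

lemma Dfun_diag : ∀ n, Dfun n n = n.factorial := by
  intro n
  induction n with
  | zero => simp [Dfun]
  | succ m ih =>
    rw [Dfun_rec, Finset.sum_range_succ]
    have : ∑ k ∈ range m, (m.choose k : ℝ) * Dfun m k = 0 := by
      refine Finset.sum_eq_zero fun k hk => ?_
      rw [Dfun_lt m k (mem_range.1 hk), mul_zero]
    rw [this, zero_add, ih, Nat.choose_self]
    push_cast [Nat.factorial_succ]
    ring

/-- Key combinatorial identity: the `n`-th finite difference of `x^n` is `n!`. -/
lemma key_identity (n : ℕ) (a : ℝ) :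
    ∑ b ∈ range (n + 1), (-1 : ℝ) ^ (n - b) * (n.choose b) * (a + b) ^ n
      = n.factorial := by
  have expand : ∀ b : ℕ, (a + (b : ℝ)) ^ n
      = ∑ i ∈ range (n + 1), ((b : ℝ)) ^ i * a ^ (n - i) * (n.choose i) := by
    intro b
    rw [add_comm a ((b : ℝ)), add_pow]
  calc ∑ b ∈ range (n + 1), (-1 : ℝ) ^ (n - b) * (n.choose b) * (a + b) ^ n
      = ∑ b ∈ range (n + 1), ∑ i ∈ range (n + 1),
          a ^ (n - i) * (n.choose i) * ((-1 : ℝ) ^ (n - b) * (n.choose b) * (b : ℝ) ^ i) := by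
        refine Finset.sum_congr rfl fun b _ => ?_
        rw [expand b, Finset.mul_sum]
        refine Finset.sum_congr rfl fun i _ => by ring
    _ = ∑ i ∈ range (n + 1), a ^ (n - i) * (n.choose i) * Dfun n i := by
        rw [Finset.sum_comm]
        refine Finset.sum_congr rfl fun i _ => by
          simp only [Dfun]; rw [Finset.mul_sum]
    _ = n.factorial := by
        rw [Finset.sum_range_succ]
        have : ∑ i ∈ range n, a ^ (n - i) * (n.choose i) * Dfun n i = 0 := by
          refine Finset.sum_eq_zero fun i hi => ?_
          rw [Dfun_lt n i (mem_range.1 hi), mul_zero]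
        rw [this, zero_add, Dfun_diag, Nat.choose_self, Nat.sub_self]
        push_cast; ring

end AuxComb

section AuxGeo


def simplexSet (n : ℕ) : Set (Fin n → ℝ) := {x | (∀ i, 0 ≤ x i) ∧ ∑ i, x i ≤ 1}

lemma convex_simplexSet (n : ℕ) : Convex ℝ (simplexSet n) := by
  rintro x ⟨hx1, hx2⟩ y ⟨hy1, hy2⟩ a b ha hb hab
  constructor
  · intro i
    simp only [Pi.add_apply, Pi.smul_apply, smul_eq_mul]
    have := mul_nonneg ha (hx1 i)
    have := mul_nonneg hb (hy1 i)
    linarith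
  · simp only [Pi.add_apply, Pi.smul_apply, smul_eq_mul, Finset.sum_add_distrib,
      ← Finset.mul_sum]
    nlinarith [mul_le_mul_of_nonneg_left hx2 ha, mul_le_mul_of_nonneg_left hy2 hb]

lemma zero_mem_simplexSet (n : ℕ) : (0 : Fin n → ℝ) ∈ simplexSet n := by
  constructor
  · intro i; simp
  · simp

lemma unitSimplex_eq (n : ℕ) : unitSimplex n = simplexSet n := by
  apply le_antisymm
  · apply convexHull_min _ (convex_simplexSet n)
    rintro x hx
    rcases Set.mem_insert_iff.1 hx with rfl | ⟨i, rfl⟩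
    · exact zero_mem_simplexSet n
    · constructor
      · intro j
        by_cases h : j = i
        · subst h; simp
        · simp [Pi.single_apply, h]
      · simp [Pi.single_apply]
  · rintro x ⟨hx1, hx2⟩
    -- x = centerMass over Option (Fin n)
    have key : (Finset.univ : Finset (Option (Fin n))).centerMass
        (fun o => Option.elim o (1 - ∑ i, x i) (fun i => x i))
        (fun o => Option.elim o (0 : Fin n → ℝ) (fun i => Pi.single i (1 : ℝ))) = x := by
      rw [Finset.centerMass]
      have hsum : ∑ o : Option (Fin n),
          Option.elim o (1 - ∑ i, x i) (fun i => x i) = 1 := by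
        rw [Fintype.sum_option]
        simp
      rw [hsum, inv_one, one_smul, Fintype.sum_option]
      simp only [Option.elim]
      rw [smul_zero, zero_add]
      have : ∀ i : Fin n, x i • (Pi.single i (1 : ℝ) : Fin n → ℝ) = (Pi.single i (x i) : Fin n → ℝ) := by
        intro i
        ext j
        by_cases h : j = i
        · subst h; simp
        · simp [Pi.single_apply, h]
      simp_rw [this]
      exact Finset.univ_sum_single x
    rw [← key]
    apply Finset.centerMass_mem_convexHull
    · rintro (_ | i) _
      · simpa using by linarith
      · exact hx1 i
    · rw [Fintype.sum_option]; simp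
    · rintro (_ | i) _
      · exact Set.mem_insert _ _
      · exact Set.subset_insert _ _ ⟨i, rfl⟩

lemma isClosed_simplexSet (n : ℕ) : IsClosed (simplexSet n) := by
  have h1 : IsClosed {x : Fin n → ℝ | ∀ i, 0 ≤ x i} := by
    have : {x : Fin n → ℝ | ∀ i, 0 ≤ x i} = ⋂ i, {x | 0 ≤ x i} := by
      ext x; simp
    rw [this]
    exact isClosed_iInter fun i => isClosed_le continuous_const (continuous_apply i)
  have h2 : IsClosed {x : Fin n → ℝ | ∑ i, x i ≤ 1} :=
    isClosed_le (continuous_finset_sum _ fun i _ => continuous_apply i) continuous_const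
  exact h1.inter h2

lemma smul_simplexSet {n : ℕ} {c : ℝ} (hc : 0 < c) :
    c • simplexSet n = {x | (∀ i, 0 ≤ x i) ∧ ∑ i, x i ≤ c} := by
  ext x
  rw [Set.mem_smul_set_iff_inv_smul_mem₀ (ne_of_gt hc)]
  simp only [simplexSet, Set.mem_setOf_eq, Pi.smul_apply, smul_eq_mul]
  constructor
  · rintro ⟨h1, h2⟩
    constructor
    · intro i
      have := h1 i
      nlinarith [inv_pos.2 hc]
    · rw [← Finset.mul_sum] at h2
      rw [← div_le_one hc] at *
      calc (∑ i, x i) / c = c⁻¹ * ∑ i, x i := by field_simp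
        _ ≤ 1 := h2
  · rintro ⟨h1, h2⟩
    constructor
    · intro i
      exact mul_nonneg (le_of_lt (inv_pos.2 hc)) (h1 i)
    · rw [← Finset.mul_sum]
      calc c⁻¹ * ∑ i, x i ≤ c⁻¹ * c := by
            apply mul_le_mul_of_nonneg_left h2 (le_of_lt (inv_pos.2 hc))
        _ = 1 := inv_mul_cancel₀ (ne_of_gt hc)

lemma volume_simplexSet : ∀ n : ℕ, volume (simplexSet n) = ENNReal.ofReal (1 / n.factorial) := by
  intro n
  induction n with
  | zero =>
    have : simplexSet 0 = Set.univ := by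
      ext x
      simp [simplexSet]
    rw [this]
    rw [volume_pi, Measure.pi_univ]
    simp
  | succ n ih =>
    set Vn := volume (simplexSet n) with hVn
    have hmp := volume_preserving_piFinSuccAbove (fun _ : Fin (n + 1) => ℝ) 0
    set T : Set (ℝ × (Fin n → ℝ)) :=
      {p | 0 ≤ p.1 ∧ (∀ i, 0 ≤ p.2 i) ∧ p.1 + ∑ i, p.2 i ≤ 1} with hT
    have hTmeas : MeasurableSet T := by
      have h1 : IsClosed {p : ℝ × (Fin n → ℝ) | 0 ≤ p.1} :=
        isClosed_le continuous_const continuous_fst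
      have h2 : IsClosed {p : ℝ × (Fin n → ℝ) | ∀ i, 0 ≤ p.2 i} := by
        have he : {p : ℝ × (Fin n → ℝ) | ∀ i, 0 ≤ p.2 i} = ⋂ i, {p | 0 ≤ p.2 i} := by
          ext p; simp
        rw [he]
        exact isClosed_iInter fun i =>
          isClosed_le continuous_const ((continuous_apply i).comp continuous_snd)
      have h3 : IsClosed {p : ℝ × (Fin n → ℝ) | p.1 + ∑ i, p.2 i ≤ 1} :=
        isClosed_le (continuous_fst.add
          (continuous_finset_sum _ fun i _ => (continuous_apply i).comp continuous_snd))
          continuous_const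
      have he2 : T = {p : ℝ × (Fin n → ℝ) | 0 ≤ p.1} ∩
          ({p | ∀ i, 0 ≤ p.2 i} ∩ {p | p.1 + ∑ i, p.2 i ≤ 1}) := by
        ext p; simp [hT, and_assoc]
      rw [he2]
      exact (h1.inter (h2.inter h3)).measurableSet
    have hpre : (MeasurableEquiv.piFinSuccAbove (fun _ : Fin (n + 1) => ℝ) 0) ⁻¹' T
        = simplexSet (n + 1) := by
      ext x
      simp only [Set.mem_preimage, MeasurableEquiv.piFinSuccAbove_apply, hT,
        Set.mem_setOf_eq, Fin.zero_succAbove, simplexSet]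
      rw [Fin.forall_fin_succ, Fin.sum_univ_succ]
      tauto
    have hvol : volume (simplexSet (n + 1)) = volume T := by
      rw [← hpre]
      exact hmp.measure_preimage hTmeas.nullMeasurableSet
    rw [hvol, MeasureTheory.Measure.volume_eq_prod, Measure.prod_apply hTmeas]
    have hslice : ∀ t : ℝ, volume (Prod.mk t ⁻¹' T)
        = Set.indicator (Set.Icc (0 : ℝ) 1)
            (fun t => ENNReal.ofReal ((1 - t) ^ n) * Vn) t := by
      intro t
      have hpre2 : Prod.mk t ⁻¹' T
          = {x : Fin n → ℝ | 0 ≤ t ∧ (∀ i, 0 ≤ x i) ∧ t + ∑ i, x i ≤ 1} := by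
        ext x; simp [hT]
      rw [hpre2]
      rcases lt_or_ge t 0 with ht | ht
      · have hempty : {x : Fin n → ℝ | 0 ≤ t ∧ (∀ i, 0 ≤ x i) ∧ t + ∑ i, x i ≤ 1} = ∅ := by
          ext x; simp only [Set.mem_setOf_eq, Set.mem_empty_iff_false, iff_false]
          rintro ⟨h, -, -⟩; linarith
        rw [hempty, Set.indicator_of_notMem (by simp [Set.mem_Icc]; intro h; linarith)]
        simp
      rcases lt_or_ge t 1 with ht1 | ht1
      · have hset : {x : Fin n → ℝ | 0 ≤ t ∧ (∀ i, 0 ≤ x i) ∧ t + ∑ i, x i ≤ 1}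
            = (1 - t) • simplexSet n := by
          rw [smul_simplexSet (by linarith)]
          ext x
          simp only [Set.mem_setOf_eq]
          constructor
          · rintro ⟨-, h1, h2⟩; exact ⟨h1, by linarith⟩
          · rintro ⟨h1, h2⟩; exact ⟨ht, h1, by linarith⟩
        rw [hset, Measure.addHaar_smul_of_nonneg volume (by linarith : (0 : ℝ) ≤ 1 - t),
          Set.indicator_of_mem (Set.mem_Icc.2 ⟨ht, le_of_lt ht1⟩) _, Module.finrank_fintype_fun_eq_card,
          Fintype.card_fin]
      · rcases eq_or_lt_of_le ht1 with heq | hgt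
        · -- t = 1
          subst heq
          rw [Set.indicator_of_mem (show (1 : ℝ) ∈ Set.Icc (0 : ℝ) 1 by
            simp [Set.mem_Icc]) _]
          rcases Nat.eq_zero_or_pos n with hn0 | hn0
          · subst hn0
            have huniv : {x : Fin 0 → ℝ | 0 ≤ (1 : ℝ) ∧ (∀ i, 0 ≤ x i)
                ∧ (1 : ℝ) + ∑ i, x i ≤ 1} = Set.univ := by
              ext x
              simp
            rw [huniv, volume_pi, Measure.pi_univ]
            show (1 : ENNReal) = _
            rw [ih]
            norm_num
          · have hzero : {x : Fin n → ℝ | 0 ≤ (1 : ℝ) ∧ (∀ i, 0 ≤ x i)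
                ∧ (1 : ℝ) + ∑ i, x i ≤ 1} = {0} := by
              ext x
              simp only [Set.mem_setOf_eq, Set.mem_singleton_iff]
              constructor
              · rintro ⟨-, h1, h2⟩
                funext i
                have hle : x i ≤ ∑ j, x j :=
                  Finset.single_le_sum (fun j _ => h1 j) (Finset.mem_univ i)
                have : x i ≤ 0 := by linarith
                exact le_antisymm this (h1 i)
              · rintro rfl
                refine ⟨zero_le_one, fun i => le_refl 0, by simp⟩
            rw [hzero]
            haveI : Nonempty (Fin n) := ⟨⟨0, hn0⟩⟩
            rw [volume_pi]
            rw [measure_singleton]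
            rw [show ((1 : ℝ) - 1) = 0 by ring, zero_pow (Nat.pos_iff_ne_zero.1 hn0)]
            simp
        · have hempty : {x : Fin n → ℝ | 0 ≤ t ∧ (∀ i, 0 ≤ x i) ∧ t + ∑ i, x i ≤ 1} = ∅ := by
            ext x; simp only [Set.mem_setOf_eq, Set.mem_empty_iff_false, iff_false]
            rintro ⟨-, h1, h2⟩
            have : (0 : ℝ) ≤ ∑ i, x i := Finset.sum_nonneg fun i _ => h1 i
            linarith
          rw [hempty, Set.indicator_of_notMem (by simp [Set.mem_Icc]; intro h; linarith)]
          simp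
    rw [lintegral_congr hslice, lintegral_indicator measurableSet_Icc]
    have hm : Measurable fun t : ℝ => ENNReal.ofReal ((1 - t) ^ n) :=
      ((continuous_const.sub continuous_id).pow n).measurable.ennreal_ofReal
    rw [lintegral_mul_const _ hm]
    have hint : ∫⁻ t in Set.Icc (0 : ℝ) 1, ENNReal.ofReal ((1 - t) ^ n)
        = ENNReal.ofReal (1 / (n + 1)) := by
      have hInt : IntegrableOn (fun t : ℝ => (1 - t) ^ n) (Set.Icc (0 : ℝ) 1) volume := by
        apply Continuous.integrableOn_Icc
        exact (continuous_const.sub continuous_id).pow n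
      rw [← ofReal_integral_eq_lintegral_ofReal hInt
        (by
          filter_upwards [ae_restrict_mem measurableSet_Icc] with t ht
          exact pow_nonneg (by linarith [ht.2]) n)]
      congr 1
      calc ∫ t in Set.Icc (0 : ℝ) 1, (1 - t) ^ n
          = ∫ t in (0 : ℝ)..1, (1 - t) ^ n := by
            rw [intervalIntegral.integral_of_le zero_le_one,
              MeasureTheory.integral_Icc_eq_integral_Ioc]
        _ = ∫ t in (1 - 1 : ℝ)..(1 - 0 : ℝ), t ^ n := by
            rw [intervalIntegral.integral_comp_sub_left (fun x => x ^ n) 1]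
        _ = 1 / (n + 1) := by
            norm_num [integral_pow]
    rw [hint, ih, ← ENNReal.ofReal_mul (by positivity)]
    congr 1
    rw [Nat.factorial_succ]
    push_cast
    field_simp

lemma prodSetAdd {V W : Type*} [AddCommGroup V] [AddCommGroup W]
    (X₁ X₂ : Set V) (Y₁ Y₂ : Set W) :
    (X₁ ×ˢ Y₁) + (X₂ ×ˢ Y₂) = (X₁ + X₂) ×ˢ (Y₁ + Y₂) := by
  ext ⟨u, v⟩
  constructor
  · rintro ⟨⟨x₁, y₁⟩, ⟨hx₁, hy₁⟩, ⟨x₂, y₂⟩, ⟨hx₂, hy₂⟩, h⟩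
    rw [Prod.ext_iff] at h
    exact ⟨by rw [← h.1]; exact Set.add_mem_add hx₁ hx₂,
      by rw [← h.2]; exact Set.add_mem_add hy₁ hy₂⟩
  · rintro ⟨⟨x₁, hx₁, x₂, hx₂, hu⟩, ⟨y₁, hy₁, y₂, hy₂, hv⟩⟩
    exact ⟨(x₁, y₁), ⟨hx₁, hy₁⟩, (x₂, y₂), ⟨hx₂, hy₂⟩, by
      rw [Prod.ext_iff]; exact ⟨hu, hv⟩⟩

lemma sumProdSets {ι : Type*} {V W : Type*} [AddCommGroup V] [AddCommGroup W]
    [DecidableEq ι] (A : Finset ι) (X : ι → Set V) (Y : ι → Set W) :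
    ∑ j ∈ A, (X j ×ˢ Y j) = (∑ j ∈ A, X j) ×ˢ (∑ j ∈ A, Y j) := by
  induction A using Finset.induction with
  | empty =>
    simp only [Finset.sum_empty]
    ext ⟨u, v⟩
    simp [Set.mem_prod, ← Set.singleton_zero, Prod.ext_iff]
  | insert _ _ hj ih =>
    rw [Finset.sum_insert hj, Finset.sum_insert hj, Finset.sum_insert hj, ih, prodSetAdd]

lemma nsmulSet {V : Type*} [AddCommGroup V] [Module ℝ V] {S : Set V}
    (hS : Convex ℝ S) (hne : S.Nonempty) : ∀ k : ℕ, k • S = (k : ℝ) • S := by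
  intro k
  induction k with
  | zero =>
    rw [zero_nsmul, Nat.cast_zero, Set.zero_smul_set hne]
  | succ k ih =>
    rw [succ_nsmul, ih, Nat.cast_succ, hS.add_smul (Nat.cast_nonneg k) zero_le_one, one_smul]

lemma sum_powerset_card_fn {n : ℕ} (f : ℕ → ℝ) :
    ∑ B ∈ (Finset.univ : Finset (Fin n)).powerset, f B.card
      = ∑ b ∈ Finset.range (n + 1), (n.choose b : ℝ) * f b := by
  rw [Finset.sum_powerset]
  rw [show (Finset.univ : Finset (Fin n)).card = n by simp]
  refine Finset.sum_congr rfl fun j hj => ?_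
  have hcard : ∀ t ∈ Finset.powersetCard j (Finset.univ : Finset (Fin n)), f t.card = f j := by
    intro t ht
    rw [(Finset.mem_powersetCard.1 ht).2]
  rw [Finset.sum_congr rfl hcard, Finset.sum_const, Finset.card_powersetCard]
  simp [nsmul_eq_mul]

end AuxGeo

/-- Lemma (Lemma 3.6 of the paper): for polytopes `P_1, …, P_n ⊆ ℝ^n`, setting
`P_j^y = (P_j × {0}) + ({0} × S_n) ⊆ ℝ^n × ℝ^n` and `S_n^y = {0} × S_n`, one has
`MV_{2n}(P_1^y, …, P_n^y, S_n^y, …, S_n^y) = MV_n(P_1, …, P_n)` (with `n` copies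
of `S_n^y`). -/

theorem mixedVol_shifted_eq (n : ℕ) (hn : 1 ≤ n)
    (P : Fin n → Set (Fin n → ℝ)) (hP : ∀ j, IsPolytope (P j))
    (Py Sy : Fin n → Set ((Fin n → ℝ) × (Fin n → ℝ)))
    (hSy : ∀ j, Sy j = (fun y => ((0 : Fin n → ℝ), y)) '' unitSimplex n)
    (hPy : ∀ j, Py j =
      ((fun x => (x, (0 : Fin n → ℝ))) '' P j) +
        ((fun y => ((0 : Fin n → ℝ), y)) '' unitSimplex n)) :
    mixedVol (Sum.elim Py Sy : Fin n ⊕ Fin n → Set ((Fin n → ℝ) × (Fin n → ℝ)))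
      = mixedVol P := by
  classical
  haveI : Nonempty (Fin n) := ⟨⟨0, hn⟩⟩
  have hSconv : Convex ℝ (unitSimplex n) := convex_convexHull ℝ _
  have hS0 : (0 : Fin n → ℝ) ∈ unitSimplex n := subset_convexHull ℝ _ (Set.mem_insert _ _)
  have hSne : (unitSimplex n).Nonempty := ⟨0, hS0⟩
  have hSvol : volume (unitSimplex n) = ENNReal.ofReal (1 / n.factorial) := by
    rw [unitSimplex_eq]; exact volume_simplexSet n
  have hzero : volume ((0 : Set (Fin n → ℝ))) = 0 := by
    rw [← Set.singleton_zero, volume_pi]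
    exact measure_singleton _
  have hPyprod : ∀ j, Py j = P j ×ˢ unitSimplex n := by
    intro j
    rw [hPy j, ← Set.prod_singleton, ← Set.singleton_prod, prodSetAdd,
      Set.singleton_zero, add_zero, zero_add]
  have hSyprod : ∀ j, Sy j = ({0} : Set (Fin n → ℝ)) ×ˢ unitSimplex n := by
    intro j; rw [hSy j, ← Set.singleton_prod]
  -- the Minkowski sum over `A.disjSum B` is a product set
  have hsum : ∀ A B : Finset (Fin n),
      ∑ i ∈ A.disjSum B, Sum.elim Py Sy i
        = (∑ j ∈ A, P j) ×ˢ ((((A.card : ℝ)) + (B.card : ℝ)) • unitSimplex n) := by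
    intro A B
    rw [Finset.sum_disjSum]; simp only [Sum.elim_inl, Sum.elim_inr]
    have h1 : ∑ j ∈ A, Py j = (∑ j ∈ A, P j) ×ˢ (((A.card : ℝ)) • unitSimplex n) := by
      calc ∑ j ∈ A, Py j = ∑ j ∈ A, (P j ×ˢ unitSimplex n) := by
            exact Finset.sum_congr rfl fun j _ => hPyprod j
        _ = (∑ j ∈ A, P j) ×ˢ (∑ j ∈ A, unitSimplex n) := sumProdSets A P _
        _ = (∑ j ∈ A, P j) ×ˢ (((A.card : ℝ)) • unitSimplex n) := by
            rw [Finset.sum_const, nsmulSet hSconv hSne]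
    have h2 : ∑ j ∈ B, Sy j = ({0} : Set (Fin n → ℝ)) ×ˢ (((B.card : ℝ)) • unitSimplex n) := by
      calc ∑ j ∈ B, Sy j = ∑ j ∈ B, (({0} : Set (Fin n → ℝ)) ×ˢ unitSimplex n) := by
            exact Finset.sum_congr rfl fun j _ => hSyprod j
        _ = (∑ j ∈ B, ({0} : Set (Fin n → ℝ))) ×ˢ (∑ j ∈ B, unitSimplex n) :=
            sumProdSets B _ _
        _ = ({0} : Set (Fin n → ℝ)) ×ˢ (((B.card : ℝ)) • unitSimplex n) := by
            rw [Finset.sum_const, Finset.sum_const, nsmulSet hSconv hSne,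
              Set.singleton_zero, nsmul_zero]
    rw [h1, h2, prodSetAdd, Set.singleton_zero, add_zero,
      ← hSconv.add_smul (Nat.cast_nonneg A.card) (Nat.cast_nonneg B.card)]
  -- volume of each term
  have hvol : ∀ A B : Finset (Fin n),
      (volume (∑ i ∈ A.disjSum B, Sum.elim Py Sy i)).toReal
        = (volume (∑ j ∈ A, P j)).toReal
            * (((A.card : ℝ) + (B.card : ℝ)) ^ n / n.factorial) := by
    intro A B
    rw [hsum A B, MeasureTheory.Measure.volume_eq_prod, Measure.prod_prod,
      Measure.addHaar_smul_of_nonneg volume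
        (by positivity : (0 : ℝ) ≤ (A.card : ℝ) + (B.card : ℝ)),
      Module.finrank_fintype_fun_eq_card, Fintype.card_fin, hSvol,
      ← ENNReal.ofReal_mul (by positivity), ENNReal.toReal_mul,
      ENNReal.toReal_ofReal (by positivity)]
    ring
  have hfacne : (n.factorial : ℝ) ≠ 0 := Nat.cast_ne_zero.2 (Nat.factorial_ne_zero n)
  unfold mixedVol
  calc ∑ I ∈ Finset.univ.powerset,
        (if I.Nonempty then
          (-1 : ℝ) ^ (Fintype.card (Fin n ⊕ Fin n) - I.card)
            * (volume (∑ i ∈ I, Sum.elim Py Sy i)).toReal else 0)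
      = ∑ A ∈ (Finset.univ : Finset (Fin n)).powerset,
          ∑ B ∈ (Finset.univ : Finset (Fin n)).powerset,
          (if (A.disjSum B).Nonempty then
            (-1 : ℝ) ^ (Fintype.card (Fin n ⊕ Fin n) - (A.disjSum B).card)
              * (volume (∑ i ∈ A.disjSum B, Sum.elim Py Sy i)).toReal else 0) := by
        rw [← Finset.sum_product'
          (f := fun A B : Finset (Fin n) =>
            if (A.disjSum B).Nonempty then
              (-1 : ℝ) ^ (Fintype.card (Fin n ⊕ Fin n) - (A.disjSum B).card)
                * (volume (∑ i ∈ A.disjSum B, Sum.elim Py Sy i)).toReal else 0)]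
        refine Finset.sum_bij' (fun I _ => (I.toLeft, I.toRight))
          (fun p _ => p.1.disjSum p.2) ?_ ?_ ?_ ?_ ?_
        · intro I _; simp [Finset.mem_product]
        · intro p _; simp
        · intro I _; exact Finset.toLeft_disjSum_toRight
        · intro p _; simp
        · intro I _; rw [Finset.toLeft_disjSum_toRight]
    _ = ∑ A ∈ (Finset.univ : Finset (Fin n)).powerset,
          (if A.Nonempty then
            (-1 : ℝ) ^ (n - A.card) * (volume (∑ j ∈ A, P j)).toReal else 0) := by
        refine Finset.sum_congr rfl fun A _ => ?_
        by_cases hA : A.Nonempty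
        · rw [if_pos hA]
          obtain ⟨a, ha⟩ := hA
          have haA : A.card ≤ n := by
            simpa using Finset.card_le_univ A
          have hstep : ∀ B : Finset (Fin n),
              (if (A.disjSum B).Nonempty then
                (-1 : ℝ) ^ (Fintype.card (Fin n ⊕ Fin n) - (A.disjSum B).card)
                  * (volume (∑ i ∈ A.disjSum B, Sum.elim Py Sy i)).toReal else 0)
              = ((-1 : ℝ) ^ (n - A.card) * (volume (∑ j ∈ A, P j)).toReal / n.factorial)
                  * ((-1 : ℝ) ^ (n - B.card) * ((A.card : ℝ) + (B.card : ℝ)) ^ n) := by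
            intro B
            have hne : (A.disjSum B).Nonempty := ⟨Sum.inl a, by simp [ha]⟩
            rw [if_pos hne, hvol A B, Finset.card_disjSum]
            have hbB : B.card ≤ n := by simpa using Finset.card_le_univ B
            have hcards : Fintype.card (Fin n ⊕ Fin n) = n + n := by simp
            have hsgn : (-1 : ℝ) ^ (n + n - (A.card + B.card))
                = (-1 : ℝ) ^ (n - A.card) * (-1 : ℝ) ^ (n - B.card) := by
              rw [← pow_add]
              congr 1
              omega
            rw [hcards, hsgn]
            ring
          rw [Finset.sum_congr rfl fun B _ => hstep B, ← Finset.mul_sum]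
          have hkey : ∑ B ∈ (Finset.univ : Finset (Fin n)).powerset,
              (-1 : ℝ) ^ (n - B.card) * ((A.card : ℝ) + (B.card : ℝ)) ^ n
              = (n.factorial : ℝ) := by
            rw [sum_powerset_card_fn (fun b => (-1 : ℝ) ^ (n - b) * ((A.card : ℝ) + (b : ℝ)) ^ n)]
            rw [← key_identity n (A.card : ℝ)]
            refine Finset.sum_congr rfl fun b _ => ?_
            ring
          rw [hkey]
          field_simp
        · rw [if_neg hA]
          obtain rfl : A = ∅ := Finset.not_nonempty_iff_eq_empty.1 hA
          refine Finset.sum_eq_zero fun B _ => ?_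
          split_ifs with h
          · rw [hvol ∅ B, Finset.sum_empty]
            rw [hzero]
            simp
          · rfl
    _ = ∑ I ∈ Finset.univ.powerset,
          (if I.Nonempty then
            (-1 : ℝ) ^ (Fintype.card (Fin n) - I.card)
              * (volume (∑ i ∈ I, P i)).toReal else 0) := by
        refine Finset.sum_congr rfl fun A _ => ?_
        rw [Fintype.card_fin]
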